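/- (Estimation Lemma) Assume a nested system of fundamental sequences on Γ with norm |·|. If s is a finite set of naturals such that s ∖ {max s} is α-large (equivalently s is (1 ⊎ α)-large), then there is no strictly decreasing function h : s → α satisfying |h(s_i)| ≤ s_i for all i < |s|. -/

import Mathlib

open Ordinal

/-- A system of fundamental sequences on `Γ`: to each ordinal `α ≤ Γ` we associate a
non-decreasing sequence `fs α n` with `sup {fs α n + 1 : n} = α` for `α ≠ 0`, and `fs 0 n = 0`. -/
structure FSSystem (Γ : Ordinal) where
  fs : Ordinal → ℕ → Ordinal
  fs_zero : ∀ n, fs 0 n = 0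
  mono : ∀ α, α ≤ Γ → Monotone (fs α)
  sup_eq : ∀ α, α ≤ Γ → α ≠ 0 → (⨆ n : ℕ, fs α n + 1) = α

/-- The system is nested: it is never the case, for `γ < β ≤ Γ` and `n > 1`,
that `γ > β[n] > γ[n]`. -/
def FSSystem.Nested {Γ : Ordinal} (S : FSSystem Γ) : Prop :=
  ∀ γ β (n : ℕ), γ < β → β ≤ Γ → 1 < n → ¬ (S.fs γ n < S.fs β n ∧ S.fs β n < γ)

/-- Iterated evaluation `α[s_0][s_1]…[s_{m-1}]` along a list. -/
def FSSystem.evalL {Γ : Ordinal} (S : FSSystem Γ) (α : Ordinal) (s : List ℕ) : Ordinal :=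
  s.foldl S.fs α

/-- `α ⇒_n β`: `β` is obtained from `α` by finitely many applications of `δ ↦ δ[n]`. -/
def FSSystem.Reaches {Γ : Ordinal} (S : FSSystem Γ) (n : ℕ) (α β : Ordinal) : Prop :=
  ∃ k : ℕ, (fun δ => S.fs δ n)^[k] α = β

/-- The norm `|α| = min {n > 1 : Γ ⇒_n α}`. -/
noncomputable def FSSystem.norm {Γ : Ordinal} (S : FSSystem Γ) (α : Ordinal) : ℕ :=
  sInf {n : ℕ | 1 < n ∧ S.Reaches n Γ α}

/-- Iterated evaluation `α[s]` along the increasing enumeration of a finite set. -/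
def FSSystem.evalF {Γ : Ordinal} (S : FSSystem Γ) (α : Ordinal) (s : Finset ℕ) : Ordinal :=
  S.evalL α (s.sort (· ≤ ·))

namespace FSSystem

variable {Γ : Ordinal} (S : FSSystem Γ)

/-- Fundamental sequence values are strictly below a nonzero ordinal. -/
lemma fs_lt {δ : Ordinal} (hδ : δ ≤ Γ) (h0 : δ ≠ 0) (n : ℕ) : S.fs δ n < δ := by
  have h1 : S.fs δ n + 1 ≤ ⨆ m : ℕ, S.fs δ m + 1 :=
    le_ciSup (Ordinal.bddAbove_range _) n
  rw [S.sup_eq δ hδ h0] at h1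
  exact lt_of_lt_of_le (lt_of_lt_of_le (lt_add_one _) le_rfl) h1

lemma fs_le {δ : Ordinal} (hδ : δ ≤ Γ) (n : ℕ) : S.fs δ n ≤ δ := by
  rcases eq_or_ne δ 0 with rfl | h0
  · simp [S.fs_zero]
  · exact (S.fs_lt hδ h0 n).le

lemma iterate_le (n : ℕ) : ∀ k : ℕ, (fun δ => S.fs δ n)^[k] Γ ≤ Γ := by
  intro k
  induction k with
  | zero => simp
  | succ k ih =>
    rw [Function.iterate_succ_apply']
    exact (S.fs_le ih n).trans ih

lemma reaches_le {n : ℕ} {β : Ordinal} (h : S.Reaches n Γ β) : β ≤ Γ := by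
  obtain ⟨k, rfl⟩ := h
  exact S.iterate_le n k

lemma reaches_step {n : ℕ} {β : Ordinal} (h : S.Reaches n Γ β) :
    S.Reaches n Γ (S.fs β n) := by
  obtain ⟨k, rfl⟩ := h
  exact ⟨k + 1, by rw [Function.iterate_succ_apply']⟩

/-- Core goodness lemma: anything reachable with parameter `n` that is below `δ ≤ Γ`
is below `δ[n]`. -/
lemma good {n : ℕ} (hN : S.Nested) (hn : 1 < n) {β δ : Ordinal}
    (hr : S.Reaches n Γ β) (hβδ : β < δ) (hδΓ : δ ≤ Γ) : β ≤ S.fs δ n := by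
  obtain ⟨k, rfl⟩ := hr
  induction k generalizing δ with
  | zero => exact absurd hβδ (by simpa using hδΓ.not_gt)
  | succ k ih =>
    rw [Function.iterate_succ_apply'] at hβδ ⊢
    set γ := (fun δ => S.fs δ n)^[k] Γ with hγ
    have hγΓ : γ ≤ Γ := S.iterate_le n k
    rcases lt_trichotomy γ δ with h | h | h
    · exact (S.fs_le hγΓ n).trans (ih hδΓ h)
    · rw [h]
    · have hh := hN δ γ n h hγΓ hn
      push_neg at hh
      by_contra hc
      push_neg at hc
      exact absurd hβδ (hh hc).not_gt

/-- Descend along an `m`-chain: if `β` is below some `m`-reachable `γ` and `β` lies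
below `δ[m]` for every `δ` above it, then `β` itself is `m`-reachable. -/
lemma descend {m : ℕ} {β : Ordinal}
    (hP : ∀ δ, β < δ → δ ≤ Γ → β ≤ S.fs δ m) :
    ∀ γ, γ ≤ Γ → β ≤ γ → S.Reaches m Γ γ → S.Reaches m Γ β := by
  intro γ
  induction γ using Ordinal.induction with
  | h γ IH =>
    intro hγΓ hβγ hr
    rcases eq_or_lt_of_le hβγ with rfl | hlt
    · exact hr
    · have hγ0 : γ ≠ 0 := fun h0 => not_lt_zero (a := β) (h0 ▸ hlt)
      have h2 : S.fs γ m < γ := S.fs_lt hγΓ hγ0 m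
      exact IH _ h2 ((S.fs_le hγΓ m).trans hγΓ) (hP γ hlt hγΓ) (S.reaches_step hr)

/-- Reachability is monotone in the parameter. -/
lemma reaches_mono (hN : S.Nested) {n m : ℕ} (hn : 1 < n) (hnm : n ≤ m)
    {β : Ordinal} (h : S.Reaches n Γ β) : S.Reaches m Γ β := by
  obtain ⟨k, rfl⟩ := h
  induction k with
  | zero => exact ⟨0, rfl⟩
  | succ k ih =>
    rw [Function.iterate_succ_apply']
    have hγΓ : (fun δ => S.fs δ n)^[k] Γ ≤ Γ := S.iterate_le n k
    have hβr : S.Reaches n Γ (S.fs ((fun δ => S.fs δ n)^[k] Γ) n) :=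
      ⟨k + 1, by rw [Function.iterate_succ_apply']⟩
    exact S.descend
      (fun δ h1 h2 => (S.good hN hn hβr h1 h2).trans (S.mono δ h2 hnm))
      _ hγΓ (S.fs_le hγΓ n) ih

/-- Every ordinal below a reachable ordinal is reachable (for some parameter). -/
lemma reach_exists (hN : S.Nested) :
    ∀ δ, δ ≤ Γ → ∀ n, 1 < n → S.Reaches n Γ δ →
      ∀ β ≤ δ, ∃ m, 1 < m ∧ S.Reaches m Γ β := by
  intro δ
  induction δ using Ordinal.induction with
  | h δ IH =>
    intro hδΓ n hn hr β hβδ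
    rcases eq_or_lt_of_le hβδ with rfl | hlt
    · exact ⟨n, hn, hr⟩
    · have hδ0 : δ ≠ 0 := fun h0 => not_lt_zero (a := β) (h0 ▸ hlt)
      have hk : ∃ k, β ≤ S.fs δ k := by
        by_contra hc
        push_neg at hc
        have hle : (⨆ k : ℕ, S.fs δ k + 1) ≤ β :=
          ciSup_le fun k => Order.add_one_le_iff.mpr (hc k)
        rw [S.sup_eq δ hδΓ hδ0] at hle
        exact absurd hlt hle.not_gt
      obtain ⟨k, hk⟩ := hk
      have hm1 : 1 < max n k := lt_of_lt_of_le hn (le_max_left _ _)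
      have hrm : S.Reaches (max n k) Γ δ := S.reaches_mono hN hn (le_max_left _ _) hr
      have hβm : β ≤ S.fs δ (max n k) := hk.trans (S.mono δ hδΓ (le_max_right _ _))
      exact IH _ (S.fs_lt hδΓ hδ0 (max n k)) ((S.fs_le hδΓ (max n k)).trans hδΓ)
        (max n k) hm1 (S.reaches_step hrm) β hβm

/-- The norm is good: `β < δ ≤ Γ` implies `β ≤ δ[t]` whenever `|β| ≤ t`. -/
lemma norm_good (hN : S.Nested) {β δ : Ordinal} (hβδ : β < δ) (hδΓ : δ ≤ Γ)
    {t : ℕ} (ht : S.norm β ≤ t) : β ≤ S.fs δ t := by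
  have hβΓ : β ≤ Γ := hβδ.le.trans hδΓ
  have hset : {n : ℕ | 1 < n ∧ S.Reaches n Γ β}.Nonempty := by
    obtain ⟨m, hm1, hm2⟩ := S.reach_exists hN Γ le_rfl 2 one_lt_two ⟨0, rfl⟩ β hβΓ
    exact ⟨m, hm1, hm2⟩
  have hmem : 1 < S.norm β ∧ S.Reaches (S.norm β) Γ β := Nat.sInf_mem hset
  exact (S.good hN hmem.1 hmem.2 hβδ hδΓ).trans (S.mono δ hδΓ ht)

/-- Main induction along a list: if `h` decreases along `a :: l`, has small norms and
`h a < β`, then `h` of the last element is below the evaluation along the list minus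
its last element. -/
lemma main_aux (hN : S.Nested) (h : ℕ → Ordinal) :
    ∀ (l : List ℕ) (a : ℕ) (β : Ordinal), β ≤ Γ →
      S.norm (h a) ≤ a → (∀ b ∈ l, S.norm (h b) ≤ b) →
      List.Chain (fun x y => h y < h x) a l →
      h a < β →
      h ((a :: l).getLast (by simp)) < S.evalL β (a :: l).dropLast := by
  intro l
  induction l with
  | nil =>
    intro a β hβΓ _ _ _ hab
    simpa [evalL] using hab
  | cons b l ihl =>
    intro a β hβΓ hna hnl hch hab
    simp only [List.Chain, List.isChain_cons_cons] at hch
    have hkey : h b < S.fs β a :=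
      lt_of_lt_of_le hch.1 (S.norm_good hN hab hβΓ hna)
    have hstep := ihl b (S.fs β a) ((S.fs_le hβΓ a).trans hβΓ)
      (hnl b (List.mem_cons_self (a := b) (l := l))) (fun c hc => hnl c (List.mem_cons_of_mem _ hc))
      hch.2 hkey
    simpa [evalL, List.getLast] using hstep

end FSSystem

/-- Estimation Lemma: in a nested system, if `s ∖ {max s}` is `α`-large then there is no
strictly decreasing `h : s → α` with `|h(s_i)| ≤ s_i` for all `i`. -/
theorem estimation_lemma {Γ : Ordinal} (S : FSSystem Γ) (hN : S.Nested)
    (α : Ordinal) (hα : α ≤ Γ) (s : Finset ℕ) (hne : s.Nonempty)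
    (hlarge : S.evalL α ((s.sort (· ≤ ·)).dropLast) = 0) :
    ¬ ∃ h : ℕ → Ordinal,
        (∀ m ∈ s, h m < α) ∧
        (∀ m ∈ s, ∀ m' ∈ s, m < m' → h m' < h m) ∧
        (∀ m ∈ s, S.norm (h m) ≤ m) := by
  rintro ⟨h, hlt, hdec, hnorm⟩
  have hsorted := (Finset.sortedLT_sort s).pairwise
  cases hl : s.sort (· ≤ ·) with
  | nil =>
    obtain ⟨x, hx⟩ := hne
    have : x ∈ s.sort (· ≤ ·) := (Finset.mem_sort _).mpr hx
    rw [hl] at this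
    exact absurd this (List.not_mem_nil (a := x))
  | cons a t =>
    have hmem : ∀ x ∈ a :: t, x ∈ s := by
      intro x hx
      rw [← hl] at hx
      exact (Finset.mem_sort _).mp hx
    rw [hl] at hsorted
    have hpair : (a :: t).Pairwise (fun x y => h y < h x) := by
      refine hsorted.imp_of_mem ?_
      intro x y hx hy hxy
      exact hdec x (hmem x hx) y (hmem y hy) hxy
    have hchain : List.Chain (fun x y => h y < h x) a t := hpair.isChain
    have hstep := S.main_aux hN h t a α hα
      (hnorm a (hmem a (List.mem_cons_self (a := a) (l := t))))
      (fun b hb => hnorm b (hmem b (List.mem_cons_of_mem _ hb)))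
      hchain (hlt a (hmem a (List.mem_cons_self (a := a) (l := t))))
    rw [hl] at hlarge
    rw [hlarge] at hstep
    exact not_lt_zero hstep
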